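/- For 0 < β < 1 and n ≥ 1, 1/n! < Γ(β)^n / Γ(1 + nβ), i.e., W_n(1) < W_n(β). -/

import Mathlib

open Real

lemma Gamma_ge_one_of_lt_one {β : ℝ} (hβ0 : 0 < β) (hβ1 : β < 1) :
    1 ≤ Real.Gamma β := by
  have h2β : (0:ℝ) < 2 - β := by linarith
  have h2 : Real.Gamma 2 = 1 := by
    have := Real.Gamma_add_one (s := 1) one_ne_zero
    simp [Real.Gamma_one] at this; simpa using this
  have hconv : Real.Gamma ((1 / (2 - β)) • β + ((1 - β) / (2 - β)) • (2:ℝ)) ≤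
      (1 / (2 - β)) • Real.Gamma β + ((1 - β) / (2 - β)) • Real.Gamma 2 :=
    Real.convexOn_Gamma.2 (Set.mem_Ioi.mpr hβ0)
      (Set.mem_Ioi.mpr (by norm_num : (0:ℝ) < 2))
      (by positivity) (div_nonneg (by linarith) h2β.le) (by field_simp; ring)
  simp only [smul_eq_mul] at hconv
  have habc : (1 / (2 - β)) * β + ((1 - β) / (2 - β)) * 2 = 1 := by
    field_simp; ring
  rw [habc, Real.Gamma_one, h2, mul_one, one_div_mul_eq_div, ← add_div,
    le_div_iff₀ h2β, one_mul] at hconv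
  linarith

theorem Wn_gt_factorial_inv (n : ℕ) (hn : 1 ≤ n) (β : ℝ) (hβ0 : 0 < β) (hβ1 : β < 1) :
    1 / (n.factorial : ℝ) < Real.Gamma β ^ n / Real.Gamma (1 + n * β) := by
  have hfacpos : (0:ℝ) < n.factorial := by exact_mod_cast n.factorial_pos
  have hargpos : (0:ℝ) < 1 + n * β := by positivity
  have hGpos : 0 < Real.Gamma (1 + n * β) := Real.Gamma_pos_of_pos hargpos
  rw [div_lt_div_iff₀ hfacpos hGpos, one_mul]
  rcases eq_or_lt_of_le hn with h1 | h2
  · -- n = 1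
    subst h1
    have hGβ : 0 < Real.Gamma β := Real.Gamma_pos_of_pos hβ0
    have hadd : Real.Gamma (β + 1) = β * Real.Gamma β :=
      Real.Gamma_add_one hβ0.ne'
    have : (1 : ℝ) + (1:ℕ) * β = β + 1 := by push_cast; ring
    rw [this, hadd]
    simp only [pow_one, Nat.factorial_one, Nat.cast_one, mul_one]
    nlinarith
  · -- n ≥ 2
    have hn2 : 2 ≤ n := h2
    have hGβ := Gamma_ge_one_of_lt_one hβ0 hβ1
    have hpow : 1 ≤ Real.Gamma β ^ n := one_le_pow₀ hGβ
    have hfac2 : (2:ℝ) ≤ n.factorial := by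
      have := Nat.factorial_le hn2
      simp [Nat.factorial] at this
      exact_mod_cast this
    have hconv : Real.Gamma ((1 - β) • (1:ℝ) + β • ((n:ℝ) + 1)) ≤
        (1 - β) • Real.Gamma 1 + β • Real.Gamma ((n:ℝ) + 1) :=
      Real.convexOn_Gamma.2 (Set.mem_Ioi.mpr (by norm_num : (0:ℝ) < 1))
        (Set.mem_Ioi.mpr (by positivity : (0:ℝ) < (n:ℝ) + 1))
        (by linarith) hβ0.le (by ring)
    have hGn : Real.Gamma ((n:ℝ) + 1) = n.factorial := by
      exact_mod_cast Real.Gamma_nat_eq_factorial n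
    simp only [smul_eq_mul] at hconv
    have harg : (1 - β) * 1 + β * ((n:ℝ) + 1) = 1 + n * β := by ring
    rw [harg, Real.Gamma_one, hGn, mul_one] at hconv
    nlinarith [hconv, mul_le_mul_of_nonneg_right hpow hfacpos.le, hfac2]
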